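/- Let v, w ∈ ℂ^N with ‖v‖ ≤ 1, ‖w‖ ≤ 1, and all coordinates of v over which w is supported nonzero. Let m > 0 and p : {1,...,N} → [0,1] satisfy m² p(i) ∈ [(1−4ζ)|vᵢ|², (1+7ζ)|vᵢ|²] for each i (interpreting the contribution as 0 when vᵢ = 0 and wᵢ = 0). Then |Σᵢ (wᵢ m² / vᵢ) p(i) − Σᵢ v̄ᵢ wᵢ| ≤ 7ζ, where the sum on the left runs over indices with vᵢ ≠ 0 and we assume wᵢ = 0 whenever vᵢ = 0. -/

import Mathlib

open BigOperators

/-- Bias bound for the importance-sampling inner-product estimator.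
If `‖v‖,‖w‖ ≤ 1`, `wᵢ = 0` whenever `vᵢ = 0`, `m > 0`, and
`m² p(i) ∈ [(1−4ζ)|vᵢ|², (1+7ζ)|vᵢ|²]` for each `i`, then
`|∑ᵢ (wᵢ m²/vᵢ) p(i) − ∑ᵢ v̄ᵢ wᵢ| ≤ 7ζ` (terms with `vᵢ = 0` contributing `0`). -/
theorem importance_sampling_bias {N : ℕ} (v w : Fin N → ℂ) (m ζ : ℝ) (p : Fin N → ℝ)
    (hζ0 : 0 ≤ ζ) (hζ1 : ζ < 1) (hm : 0 < m)
    (hv : ∑ i, ‖v i‖ ^ 2 ≤ 1) (hw : ∑ i, ‖w i‖ ^ 2 ≤ 1)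
    (hsupp : ∀ i, v i = 0 → w i = 0)
    (hp : ∀ i, p i ∈ Set.Icc (0 : ℝ) 1)
    (hpb : ∀ i, (1 - 4 * ζ) * ‖v i‖ ^ 2 ≤ m ^ 2 * p i ∧
                m ^ 2 * p i ≤ (1 + 7 * ζ) * ‖v i‖ ^ 2) :
    ‖(∑ i, if v i = 0 then (0 : ℂ)
           else (w i * (m : ℂ) ^ 2 / v i) * (p i : ℂ))
      - ∑ i, (starRingEnd ℂ) (v i) * w i‖ ≤ 7 * ζ := by
  classical
  rw [← Finset.sum_sub_distrib]
  have key : ∀ i, ‖(if v i = 0 then (0 : ℂ)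
      else (w i * (m : ℂ) ^ 2 / v i) * (p i : ℂ)) - (starRingEnd ℂ) (v i) * w i‖
      ≤ 7 * ζ * (‖w i‖ * ‖v i‖) := by
    intro i
    by_cases h : v i = 0
    · rw [if_pos h, hsupp i h]
      simp
    · have hv0 : (0:ℝ) < ‖v i‖ := norm_pos_iff.mpr h
      have heq : (if v i = 0 then (0 : ℂ)
          else (w i * (m : ℂ) ^ 2 / v i) * (p i : ℂ)) - (starRingEnd ℂ) (v i) * w i
          = (w i / v i) * (((m ^ 2 * p i - ‖v i‖ ^ 2 : ℝ)) : ℂ) := by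
        rw [if_neg h]
        have hc : v i * (starRingEnd ℂ) (v i) = ((‖v i‖ : ℝ) : ℂ) ^ 2 := by
          rw [Complex.mul_conj, ← Complex.sq_norm]; push_cast; ring
        field_simp
        push_cast
        linear_combination (-(w i)) * hc
      rw [heq, norm_mul, norm_div, Complex.norm_real]
      have habs : |m ^ 2 * p i - ‖v i‖ ^ 2| ≤ 7 * ζ * ‖v i‖ ^ 2 := by
        rcases hpb i with ⟨h1, h2⟩
        rw [abs_le]
        constructor <;> nlinarith [sq_nonneg (‖v i‖)]
      calc ‖w i‖ / ‖v i‖ * |m ^ 2 * p i - ‖v i‖ ^ 2|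
          ≤ ‖w i‖ / ‖v i‖ * (7 * ζ * ‖v i‖ ^ 2) := by
            apply mul_le_mul_of_nonneg_left habs; positivity
        _ = 7 * ζ * (‖w i‖ * ‖v i‖) := by
            have hne : ‖v i‖ ≠ 0 := by
              exact hv0.ne'
            rw [pow_two]; field_simp [hne]
  have hCS : ∑ i, ‖w i‖ * ‖v i‖ ≤ 1 := by
    have hsq : (∑ i, ‖w i‖ * ‖v i‖) ^ 2 ≤ (∑ i, ‖w i‖ ^ 2) * ∑ i, ‖v i‖ ^ 2 :=
      Finset.sum_mul_sq_le_sq_mul_sq Finset.univ (fun i => ‖w i‖) (fun i => ‖v i‖)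
    have hnn : (0:ℝ) ≤ ∑ i, ‖w i‖ * ‖v i‖ :=
      Finset.sum_nonneg fun i _ => by positivity
    nlinarith [Finset.sum_nonneg (fun i (_ : i ∈ Finset.univ) => sq_nonneg ‖w i‖),
      Finset.sum_nonneg (fun i (_ : i ∈ Finset.univ) => sq_nonneg ‖v i‖)]
  calc ‖∑ i, ((if v i = 0 then (0 : ℂ)
          else (w i * (m : ℂ) ^ 2 / v i) * (p i : ℂ)) - (starRingEnd ℂ) (v i) * w i)‖
      ≤ ∑ i, ‖(if v i = 0 then (0 : ℂ)
          else (w i * (m : ℂ) ^ 2 / v i) * (p i : ℂ)) - (starRingEnd ℂ) (v i) * w i‖ :=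
        norm_sum_le _ _
    _ ≤ ∑ i, 7 * ζ * (‖w i‖ * ‖v i‖) := Finset.sum_le_sum fun i _ => key i
    _ = 7 * ζ * ∑ i, ‖w i‖ * ‖v i‖ := by rw [Finset.mul_sum]
    _ ≤ 7 * ζ * 1 := by
        apply mul_le_mul_of_nonneg_left hCS; positivity
    _ = 7 * ζ := mul_one _
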